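/- Consider the system of equations on the variables (x, d) ∈ ℝ_+^n × ℝ: Σ_{i=1}^m c_i x^{α_i} − d·x^β = 0 and Σ_{i=1}^m c_i α_i x^{α_i} − d·β·x^β = 0 (the second being an equality of vectors in ℝ^n), where α_i ∈ ℝ^n, c_i > 0 for i = 1,…,m, β lies in the interior of conv({α_1,…,α_m}), and dim(conv({α_1,…,α_m})) = n. Then this system has exactly one solution in ℝ_+^{n+1} (i.e. with all coordinates of x positive and d > 0). -/

import Mathlib

noncomputable section

open Real Finset in
/-- uniqueness of the critical point -/
theorem aux_uniq {n m : ℕ} (c : Fin m → ℝ) (v : Fin m → Fin n → ℝ)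
    (hc : ∀ i, 0 < c i)
    (hv : ∀ w : Fin n → ℝ, w ≠ 0 → ∃ i, 0 < ∑ j, v i j * w j)
    (y z : Fin n → ℝ)
    (hy : ∀ k, ∑ i, c i * Real.exp (∑ j, v i j * y j) * v i k = 0)
    (hz : ∀ k, ∑ i, c i * Real.exp (∑ j, v i j * z j) * v i k = 0) :
    y = z := by
  by_contra hne
  have hw : y - z ≠ 0 := sub_ne_zero.mpr hne
  obtain ⟨i₀, hi₀⟩ := hv _ hw
  set a : Fin m → ℝ := fun i => ∑ j, v i j * y j with ha
  set b : Fin m → ℝ := fun i => ∑ j, v i j * z j with hb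
  have hdot : ∀ i, (∑ j, v i j * (y j - z j)) = a i - b i := by
    intro i
    simp [ha, hb, Pi.sub_apply, mul_sub, Finset.sum_sub_distrib]
  have swap : ∀ (t : Fin m → ℝ), (∀ k, ∑ i, t i * v i k = 0) →
      ∑ i, t i * (∑ j, v i j * (y j - z j)) = 0 := by
    intro t h
    have : ∑ i, t i * (∑ j, v i j * (y j - z j))
        = ∑ j, (∑ i, t i * v i j) * (y j - z j) := by
      simp only [Finset.mul_sum, Finset.sum_mul]
      rw [Finset.sum_comm]
      simp [mul_assoc]
    rw [this]
    simp [h]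
  have h1 : ∑ i, (c i * Real.exp (a i)) * (a i - b i) = 0 := by
    have := swap (fun i => c i * Real.exp (a i)) hy
    simpa [hdot] using this
  have h2 : ∑ i, (c i * Real.exp (b i)) * (a i - b i) = 0 := by
    have := swap (fun i => c i * Real.exp (b i)) hz
    simpa [hdot] using this
  have hsum : ∑ i, c i * (Real.exp (a i) - Real.exp (b i)) * (a i - b i) = 0 := by
    have : ∀ i, c i * (Real.exp (a i) - Real.exp (b i)) * (a i - b i)
        = (c i * Real.exp (a i)) * (a i - b i) - (c i * Real.exp (b i)) * (a i - b i) := by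
      intro i; ring
    rw [Finset.sum_congr rfl (fun i _ => this i), Finset.sum_sub_distrib, h1, h2, sub_zero]
  have hpos : 0 < ∑ i, c i * (Real.exp (a i) - Real.exp (b i)) * (a i - b i) := by
    apply Finset.sum_pos'
    · intro i _
      rw [mul_assoc]
      rcases le_total (a i) (b i) with h | h
      · exact mul_nonneg (hc i).le
          (mul_nonneg_of_nonpos_of_nonpos (sub_nonpos.mpr (Real.exp_le_exp.mpr h))
            (sub_nonpos.mpr h))
      · exact mul_nonneg (hc i).le
          (mul_nonneg (sub_nonneg.mpr (Real.exp_le_exp.mpr h)) (sub_nonneg.mpr h))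
    · refine ⟨i₀, Finset.mem_univ _, ?_⟩
      have hi₀' : 0 < a i₀ - b i₀ := by
        rw [← hdot i₀]; simpa [Pi.sub_apply] using hi₀
      have : Real.exp (b i₀) < Real.exp (a i₀) := Real.exp_lt_exp.mpr (by linarith)
      rw [mul_assoc]
      exact mul_pos (hc i₀) (mul_pos (sub_pos.mpr this) hi₀')
  linarith

open Real Finset in
theorem aux_exist {n m : ℕ} (hm : Nonempty (Fin m)) (c : Fin m → ℝ) (v : Fin m → Fin n → ℝ)
    (hc : ∀ i, 0 < c i)
    (hv : ∀ w : Fin n → ℝ, w ≠ 0 → ∃ i, 0 < ∑ j, v i j * w j) :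
    ∃ y : Fin n → ℝ, ∀ k, ∑ i, c i * Real.exp (∑ j, v i j * y j) * v i k = 0 := by
  rcases isEmpty_or_nonempty (Fin n) with hE | hN
  · exact ⟨0, fun k => isEmptyElim k⟩
  have hmu : (Finset.univ : Finset (Fin m)).Nonempty := Finset.univ_nonempty
  -- the objective function
  set F : (Fin n → ℝ) → ℝ := fun y => ∑ i, c i * Real.exp (∑ j, v i j * y j) with hF
  have hFc : Continuous F := by
    apply continuous_finset_sum
    intro i _
    exact continuous_const.mul (Real.continuous_exp.comp
      (continuous_finset_sum _ fun j _ => continuous_const.mul (continuous_apply j)))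
  have hFpos : ∀ y, 0 < F y := fun y =>
    Finset.sum_pos (fun i _ => mul_pos (hc i) (Real.exp_pos _)) hmu
  -- the max of linear forms
  set g : (Fin n → ℝ) → ℝ := fun u => Finset.univ.sup' hmu (fun i => ∑ j, v i j * u j) with hg
  have hgc : Continuous g := by
    apply Continuous.finset_sup'_apply hmu
    intro i _
    exact continuous_finset_sum _ fun j _ => continuous_const.mul (continuous_apply j)
  -- minimum of g on the unit sphere
  have hsne : (Metric.sphere (0 : Fin n → ℝ) 1).Nonempty := by
    obtain ⟨u, hu⟩ := exists_norm_eq (Fin n → ℝ) (zero_le_one)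
    exact ⟨u, by simpa [mem_sphere_zero_iff_norm] using hu⟩
  obtain ⟨u₀, hu₀mem, hu₀min⟩ :=
    (isCompact_sphere (0 : Fin n → ℝ) 1).exists_isMinOn hsne hgc.continuousOn
  set δ : ℝ := g u₀ with hδdef
  have hδ : 0 < δ := by
    have hu₀ : u₀ ≠ 0 := by
      intro h
      rw [mem_sphere_zero_iff_norm, h, norm_zero] at hu₀mem
      norm_num at hu₀mem
    obtain ⟨i, hi⟩ := hv u₀ hu₀
    exact lt_of_lt_of_le hi (Finset.le_sup' (fun i => ∑ j, v i j * u₀ j) (Finset.mem_univ i))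
  -- lower bound
  have hbound : ∀ y : Fin n → ℝ, y ≠ 0 → ∃ i, δ * ‖y‖ ≤ ∑ j, v i j * y j := by
    intro y hy
    have hny : 0 < ‖y‖ := norm_pos_iff.mpr hy
    set u : Fin n → ℝ := ‖y‖⁻¹ • y with hu
    have hun : ‖u‖ = 1 := by
      rw [hu, norm_smul, norm_inv, norm_norm, inv_mul_cancel₀ hny.ne']
    have humem : u ∈ Metric.sphere (0 : Fin n → ℝ) 1 := by
      rwa [mem_sphere_zero_iff_norm]
    have hgu : δ ≤ g u := hu₀min humem
    obtain ⟨i, _, hieq⟩ := Finset.exists_mem_eq_sup' hmu (fun i => ∑ j, v i j * u j)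
    refine ⟨i, ?_⟩
    have hyu : y = ‖y‖ • u := by
      rw [hu, smul_smul, mul_inv_cancel₀ hny.ne', one_smul]
    have : ∑ j, v i j * y j = ‖y‖ * ∑ j, v i j * u j := by
      rw [Finset.mul_sum]
      refine Finset.sum_congr rfl fun j _ => ?_
      conv_lhs => rw [hyu]
      simp [Pi.smul_apply, smul_eq_mul]; ring
    rw [this]
    have : δ ≤ ∑ j, v i j * u j := by rw [← hieq]; exact hgu
    calc δ * ‖y‖ = ‖y‖ * δ := by ring
    _ ≤ ‖y‖ * ∑ j, v i j * u j := by
        exact mul_le_mul_of_nonneg_left this hny.le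
  -- min of c
  set cmin : ℝ := Finset.univ.inf' hmu c with hcm
  have hcmin : 0 < cmin := by
    rw [hcm, Finset.lt_inf'_iff]
    exact fun i _ => hc i
  have hFlow : ∀ y : Fin n → ℝ, y ≠ 0 → cmin * Real.exp (δ * ‖y‖) ≤ F y := by
    intro y hy
    obtain ⟨i, hi⟩ := hbound y hy
    calc cmin * Real.exp (δ * ‖y‖) ≤ c i * Real.exp (∑ j, v i j * y j) := by
          exact mul_le_mul (Finset.inf'_le c (Finset.mem_univ i))
            (Real.exp_le_exp.mpr hi) (Real.exp_pos _).le (hc i).le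
    _ ≤ F y := Finset.single_le_sum (f := fun i => c i * Real.exp (∑ j, v i j * y j))
          (fun i _ => (mul_pos (hc i) (Real.exp_pos _)).le) (Finset.mem_univ i)
  -- radius
  set R : ℝ := Real.log (F 0 / cmin) / δ with hR
  have hgrow : ∀ y : Fin n → ℝ, max R 0 < ‖y‖ → F 0 < F y := by
    intro y hnorm
    have hny : 0 < ‖y‖ := lt_of_le_of_lt (le_max_right R 0) hnorm
    have hy0 : y ≠ 0 := norm_pos_iff.mp hny
    have h1 : Real.log (F 0 / cmin) < δ * ‖y‖ := by
      have : R < ‖y‖ := lt_of_le_of_lt (le_max_left R 0) hnorm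
      calc Real.log (F 0 / cmin) = δ * R := by
            rw [hR, mul_div_assoc', mul_div_cancel_left₀ _ hδ.ne']
      _ < δ * ‖y‖ := by exact mul_lt_mul_of_pos_left this hδ
    have h2 : F 0 / cmin < Real.exp (δ * ‖y‖) := by
      calc F 0 / cmin = Real.exp (Real.log (F 0 / cmin)) := by
            rw [Real.exp_log (div_pos (hFpos 0) hcmin)]
      _ < Real.exp (δ * ‖y‖) := Real.exp_lt_exp.mpr h1
    calc F 0 = cmin * (F 0 / cmin) := by field_simp
    _ < cmin * Real.exp (δ * ‖y‖) := mul_lt_mul_of_pos_left h2 hcmin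
    _ ≤ F y := hFlow y hy0
  -- get the minimizer on a closed ball
  have hrad : (0:ℝ) < max R 0 + 1 := by positivity
  obtain ⟨y₀, hy₀B, hy₀min⟩ :=
    (isCompact_closedBall (0 : Fin n → ℝ) (max R 0 + 1)).exists_isMinOn
      ⟨0, Metric.mem_closedBall_self hrad.le⟩ hFc.continuousOn
  have h0mem : (0 : Fin n → ℝ) ∈ Metric.closedBall (0 : Fin n → ℝ) (max R 0 + 1) :=
    Metric.mem_closedBall_self hrad.le
  have hle0 : F y₀ ≤ F 0 := hy₀min h0mem
  have hnorm₀ : ‖y₀‖ ≤ max R 0 := by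
    by_contra h
    push_neg at h
    exact absurd (hgrow y₀ h) (not_lt.mpr hle0)
  have hloc : IsLocalMin F y₀ := by
    apply hy₀min.isLocalMin
    apply Metric.closedBall_mem_nhds_of_mem
    rw [Metric.mem_ball, dist_zero_right]
    linarith
  -- the derivative
  set ℓ : Fin m → ((Fin n → ℝ) →L[ℝ] ℝ) :=
    fun i => ∑ j, v i j • ContinuousLinearMap.proj (R := ℝ) (φ := fun _ : Fin n => ℝ) j with hℓ
  have hℓa : ∀ i y, ℓ i y = ∑ j, v i j * y j := by
    intro i y
    simp [hℓ, ContinuousLinearMap.sum_apply]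
  have hD : HasFDerivAt F (∑ i, c i • (Real.exp (ℓ i y₀) • ℓ i)) y₀ := by
    have h1 : ∀ i ∈ Finset.univ, HasFDerivAt (fun y => c i * Real.exp (ℓ i y))
        (c i • (Real.exp (ℓ i y₀) • ℓ i)) y₀ :=
      fun i _ => ((ℓ i).hasFDerivAt.exp).const_mul (c i)
    have h2 := HasFDerivAt.fun_sum h1
    have : F = fun y => ∑ i, c i * Real.exp (ℓ i y) := by
      funext y
      simp [hF, hℓa]
    rw [this]
    exact h2
  have hD0 : (∑ i, c i • (Real.exp (ℓ i y₀) • ℓ i)) = 0 := hloc.hasFDerivAt_eq_zero hD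
  refine ⟨y₀, fun k => ?_⟩
  have := congrArg (fun (T : (Fin n → ℝ) →L[ℝ] ℝ) => T (Pi.single k 1)) hD0
  simp only [ContinuousLinearMap.sum_apply, ContinuousLinearMap.smul_apply,
    ContinuousLinearMap.zero_apply, smul_eq_mul] at this
  have hsingle : ∀ i, ℓ i (Pi.single k 1) = v i k := by
    intro i
    rw [hℓa]
    simp [Pi.single_apply, mul_ite, Finset.sum_ite_eq']
  rw [← this]
  refine Finset.sum_congr rfl fun i _ => ?_
  rw [hℓa, hsingle i]
  ring

open Real Finset in
theorem aux_hv {n m : ℕ} (α : Fin m → Fin n → ℝ) (β : Fin n → ℝ)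
    (hβ : β ∈ interior (convexHull ℝ (Set.range α))) :
    ∀ w : Fin n → ℝ, w ≠ 0 → ∃ i, 0 < ∑ j, (α i j - β j) * w j := by
  intro w hw
  obtain ⟨ε, hε, hball⟩ := Metric.mem_nhds_iff.mp (mem_interior_iff_mem_nhds.mp hβ)
  have hnw : 0 < ‖w‖ := norm_pos_iff.mpr hw
  set p : Fin n → ℝ := β + (ε / 2 / ‖w‖) • w with hp
  have hpmem : p ∈ convexHull ℝ (Set.range α) := by
    apply hball
    rw [Metric.mem_ball, dist_eq_norm]
    have h1 : p - β = (ε / 2 / ‖w‖) • w := by rw [hp]; abel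
    rw [h1, norm_smul, Real.norm_eq_abs, abs_of_pos (by positivity),
      div_mul_cancel₀ _ hnw.ne']
    linarith
  obtain ⟨ι, _, t, z, ht0, ht1, hzs, hzsum⟩ := mem_convexHull_iff_exists_fintype.mp hpmem
  have hww : 0 < ∑ j, w j * w j := by
    have h1 : ∀ j, 0 ≤ w j * w j := fun j => mul_self_nonneg _
    have h2 : ∃ j, w j ≠ 0 := by
      by_contra h
      push_neg at h
      exact hw (funext h)
    obtain ⟨j, hj⟩ := h2
    exact Finset.sum_pos' (fun j _ => h1 j)
      ⟨j, Finset.mem_univ j, mul_self_pos.mpr hj⟩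
  have hswap : ∑ k, t k * (∑ j, (z k j - β j) * w j)
      = ∑ j, (∑ k, t k * (z k j - β j)) * w j := by
    simp only [Finset.mul_sum, Finset.sum_mul]
    rw [Finset.sum_comm]
    simp [mul_assoc]
  have hzj : ∀ j, ∑ k, t k * z k j = p j := by
    intro j
    have := congrFun hzsum j
    simpa [Finset.sum_apply, Pi.smul_apply, smul_eq_mul] using this
  have hβj : ∀ j, ∑ k, t k * β j = β j := by
    intro j
    rw [← Finset.sum_mul, ht1, one_mul]
  have hsum : ∑ k, t k * (∑ j, (z k j - β j) * w j)
      = (ε / 2 / ‖w‖) * ∑ j, w j * w j := by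
    rw [hswap]
    have : ∀ j, (∑ k, t k * (z k j - β j)) = (ε / 2 / ‖w‖) * w j := by
      intro j
      have h1 : ∑ k, t k * (z k j - β j) = (∑ k, t k * z k j) - ∑ k, t k * β j := by
        rw [← Finset.sum_sub_distrib]
        exact Finset.sum_congr rfl fun k _ => by ring
      rw [h1, hzj, hβj, hp]
      simp [Pi.add_apply, Pi.smul_apply, smul_eq_mul]
    rw [Finset.sum_congr rfl fun j _ => by rw [this j]]
    rw [Finset.mul_sum]
    exact Finset.sum_congr rfl fun j _ => by ring
  have hpos : 0 < ∑ k, t k * (∑ j, (z k j - β j) * w j) := by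
    rw [hsum]; positivity
  have hex : ∃ k, 0 < t k * (∑ j, (z k j - β j) * w j) := by
    by_contra h
    push_neg at h
    exact absurd hpos (not_lt.mpr (Finset.sum_nonpos fun k _ => h k))
  obtain ⟨k, hk⟩ := hex
  rcases mul_pos_iff.mp hk with ⟨_, hX⟩ | ⟨htneg, _⟩
  · obtain ⟨i, hi⟩ := hzs k
    exact ⟨i, by rwa [hi]⟩
  · exact absurd (ht0 k) (not_le.mpr htneg)

open Real Finset in
/-- The system `∑ c_i x^{α_i} − d x^β = 0`,
`∑ c_i α_i x^{α_i} − d β x^β = 0` (with real exponents, `c_i > 0`, `β` in the interior of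
`conv{α_1,…,α_m}` and `dim conv{α_1,…,α_m} = n`) has exactly one solution `(x, d)` with all
coordinates of `x` positive and `d > 0`.  Here `x^α = ∏_j x_j^{α_j}` (real powers). -/
theorem stmt1 {n m : ℕ} (c : Fin m → ℝ) (α : Fin m → (Fin n → ℝ)) (β : Fin n → ℝ)
    (hc : ∀ i, 0 < c i)
    (hβ : β ∈ interior (convexHull ℝ (Set.range α)))
    (hdim : affineSpan ℝ (Set.range α) = ⊤) :
    ∃! p : (Fin n → ℝ) × ℝ,
      (∀ j, 0 < p.1 j) ∧ 0 < p.2 ∧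
      (∑ i, c i * ∏ j, p.1 j ^ α i j) - p.2 * ∏ j, p.1 j ^ β j = 0 ∧
      (∑ i, (c i * ∏ j, p.1 j ^ α i j) • α i) - (p.2 * ∏ j, p.1 j ^ β j) • β = 0 := by
  classical
  -- m is nonempty
  have hm : Nonempty (Fin m) := by
    have h1 : (convexHull ℝ (Set.range α)).Nonempty := ⟨β, interior_subset hβ⟩
    have h2 : (Set.range α).Nonempty := by
      rwa [convexHull_nonempty_iff] at h1
    exact Set.range_nonempty_iff_nonempty.mp h2
  have hmu : (Finset.univ : Finset (Fin m)).Nonempty := Finset.univ_nonempty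
  set v : Fin m → Fin n → ℝ := fun i j => α i j - β j with hvdef
  have hv : ∀ w : Fin n → ℝ, w ≠ 0 → ∃ i, 0 < ∑ j, v i j * w j := aux_hv α β hβ
  obtain ⟨y₀, hy₀⟩ := aux_exist hm c v hc hv
  -- products of rpows
  have hxp : ∀ (x : Fin n → ℝ), (∀ j, 0 < x j) → ∀ a : Fin n → ℝ,
      ∏ j, x j ^ a j = Real.exp (∑ j, a j * Real.log (x j)) := by
    intro x hx a
    rw [Real.exp_sum]
    exact Finset.prod_congr rfl fun j _ => by
      rw [Real.rpow_def_of_pos (hx j), mul_comm]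
  have hpe : ∀ a : Fin n → ℝ, ∏ j, Real.exp (y₀ j) ^ a j = Real.exp (∑ j, a j * y₀ j) := by
    intro a
    rw [hxp _ (fun j => Real.exp_pos _) a]
    simp [Real.log_exp]
  -- the candidate solution
  set d₀ : ℝ := ∑ i, c i * Real.exp (∑ j, v i j * y₀ j) with hd₀
  have hAB : ∀ i, ∑ j, v i j * y₀ j = (∑ j, α i j * y₀ j) - ∑ j, β j * y₀ j := by
    intro i
    rw [← Finset.sum_sub_distrib]
    exact Finset.sum_congr rfl fun j _ => by simp [hvdef]; ring
  have hdmul : d₀ * Real.exp (∑ j, β j * y₀ j) = ∑ i, c i * Real.exp (∑ j, α i j * y₀ j) := by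
    rw [hd₀, Finset.sum_mul]
    refine Finset.sum_congr rfl fun i _ => ?_
    rw [mul_assoc, ← Real.exp_add, hAB i, sub_add_cancel]
  have hkey : ∀ k, ∑ i, c i * Real.exp (∑ j, α i j * y₀ j) * (α i k - β k) = 0 := by
    intro k
    have h := hy₀ k
    have heq : ∑ i, c i * Real.exp (∑ j, α i j * y₀ j) * (α i k - β k)
        = Real.exp (∑ j, β j * y₀ j) * ∑ i, c i * Real.exp (∑ j, v i j * y₀ j) * v i k := by
      rw [Finset.mul_sum]
      refine Finset.sum_congr rfl fun i _ => ?_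
      rw [hAB i, show v i k = α i k - β k from rfl, Real.exp_sub]
      have hE : Real.exp (∑ j, β j * y₀ j) ≠ 0 := (Real.exp_pos _).ne'
      field_simp
    rw [heq, h, mul_zero]
  refine ⟨⟨fun j => Real.exp (y₀ j), d₀⟩, ⟨fun j => Real.exp_pos _, ?_, ?_, ?_⟩, ?_⟩
  · exact Finset.sum_pos (fun i _ => mul_pos (hc i) (Real.exp_pos _)) hmu
  · -- first equation
    show (∑ i, c i * ∏ j, Real.exp (y₀ j) ^ α i j) - d₀ * ∏ j, Real.exp (y₀ j) ^ β j = 0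
    rw [sub_eq_zero]
    simp only [hpe]
    exact hdmul.symm
  · -- second equation
    show (∑ i, (c i * ∏ j, Real.exp (y₀ j) ^ α i j) • α i)
        - (d₀ * ∏ j, Real.exp (y₀ j) ^ β j) • β = 0
    funext k
    simp only [Pi.sub_apply, Finset.sum_apply, Pi.smul_apply, smul_eq_mul, Pi.zero_apply,
      hpe]
    rw [hdmul, Finset.sum_mul, ← Finset.sum_sub_distrib, ← hkey k]
    exact Finset.sum_congr rfl fun i _ => by ring
  · -- uniqueness
    rintro ⟨x, d⟩ ⟨hx, hd, h1, h2⟩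
    set z : Fin n → ℝ := fun j => Real.log (x j) with hzdef
    have hxz : ∀ a : Fin n → ℝ, ∏ j, x j ^ a j = Real.exp (∑ j, a j * z j) := hxp x hx
    have hABz : ∀ i, ∑ j, v i j * z j = (∑ j, α i j * z j) - ∑ j, β j * z j := by
      intro i
      rw [← Finset.sum_sub_distrib]
      exact Finset.sum_congr rfl fun j _ => by simp [hvdef]; ring
    have hsum1 : ∑ i, c i * Real.exp (∑ j, α i j * z j)
        = d * Real.exp (∑ j, β j * z j) := by
      have := h1
      rw [sub_eq_zero] at this
      simpa only [hxz] using this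
    have h2k : ∀ k, ∑ i, c i * Real.exp (∑ j, α i j * z j) * α i k
        = d * Real.exp (∑ j, β j * z j) * β k := by
      intro k
      have := congrFun h2 k
      simp only [Pi.sub_apply, Finset.sum_apply, Pi.smul_apply, smul_eq_mul, Pi.zero_apply,
        hxz] at this
      linarith
    have e1 : ∀ k, ∑ i, c i * Real.exp (∑ j, α i j * z j) * (α i k - β k) = 0 := by
      intro k
      calc ∑ i, c i * Real.exp (∑ j, α i j * z j) * (α i k - β k)
          = (∑ i, c i * Real.exp (∑ j, α i j * z j) * α i k)
            - (∑ i, c i * Real.exp (∑ j, α i j * z j)) * β k := by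
            rw [Finset.sum_mul, ← Finset.sum_sub_distrib]
            exact Finset.sum_congr rfl fun i _ => by ring
      _ = d * Real.exp (∑ j, β j * z j) * β k - d * Real.exp (∑ j, β j * z j) * β k := by
            rw [h2k k, hsum1]
      _ = 0 := sub_self _
    have hcrit : ∀ k, ∑ i, c i * Real.exp (∑ j, v i j * z j) * v i k = 0 := by
      intro k
      have heq : ∑ i, c i * Real.exp (∑ j, v i j * z j) * v i k
          = Real.exp (-(∑ j, β j * z j)) * ∑ i, c i * Real.exp (∑ j, α i j * z j) * (α i k - β k) := by
        rw [Finset.mul_sum]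
        refine Finset.sum_congr rfl fun i _ => ?_
        rw [hABz i, show v i k = α i k - β k from rfl, sub_eq_add_neg (∑ j, α i j * z j),
          Real.exp_add]
        ring
      rw [heq, e1 k, mul_zero]
    have hzy : z = y₀ := aux_uniq c v hc hv z y₀ hcrit hy₀
    have hxe : x = fun j => Real.exp (y₀ j) := by
      funext j
      rw [← congrFun hzy j, hzdef]
      exact (Real.exp_log (hx j)).symm
    have hde : d = d₀ := by
      have hE : Real.exp (∑ j, β j * z j) ≠ 0 := (Real.exp_pos _).ne'
      have hstep : (∑ i, c i * Real.exp (∑ j, v i j * z j)) * Real.exp (∑ j, β j * z j)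
          = ∑ i, c i * Real.exp (∑ j, α i j * z j) := by
        rw [Finset.sum_mul]
        refine Finset.sum_congr rfl fun i _ => ?_
        rw [mul_assoc, ← Real.exp_add, hABz i, sub_add_cancel]
      have : (∑ i, c i * Real.exp (∑ j, v i j * z j)) * Real.exp (∑ j, β j * z j)
          = d * Real.exp (∑ j, β j * z j) := by rw [hstep, hsum1]
      have hd' : d = ∑ i, c i * Real.exp (∑ j, v i j * z j) :=
        (mul_right_cancel₀ hE this).symm
      rw [hd', hzy, hd₀]
    rw [Prod.mk.injEq]
    exact ⟨hxe, hde⟩
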